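/- Let m0(x) = (1+x²/2)^{-2}. Then T(m0)(x) := (1/π)∫₀^∞ m0(y)·((y/x)·ln|(x+y)/(x−y)| − 2) dy = −(√2/2)·x²/(2+x²) for every x > 0. -/

import Mathlib

open Real MeasureTheory Set Filter intervalIntegral Topology

noncomputable def m0 (x : ℝ) : ℝ := (1 + x^2/2)^(-2 : ℤ)

lemma m0_eq (y : ℝ) : m0 y = 4/(2+y^2)^2 := by
  have h : (2:ℝ)+y^2 ≠ 0 := by positivity
  rw [m0, zpow_neg]
  rw [show ((2:ℤ):ℤ) = ((2:ℕ):ℤ) by norm_num, zpow_natCast]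
  rw [eq_div_iff (by positivity)]
  field_simp
  ring

-- log inequality
lemma artanh_ge (t : ℝ) (h0 : 0 ≤ t) (h1 : t < 1) :
    2*t ≤ Real.log (1+t) - Real.log (1-t) := by
  set u : ℝ → ℝ := fun s => Real.log (1+s) - Real.log (1-s) - 2*s with hu
  have key : MonotoneOn u (Icc 0 t) := by
    have hd : ∀ s ∈ Ioo (0:ℝ) t, HasDerivAt u (1/(1+s) + 1/(1-s) - 2) s := by
      intro s hs
      have h1s : (1:ℝ)+s ≠ 0 := by nlinarith [hs.1, hs.2]
      have h2s : (1:ℝ)-s ≠ 0 := by nlinarith [hs.2, h1]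
      have d1 : HasDerivAt (fun s => Real.log (1+s)) (1/(1+s)) s := by
        simpa using (HasDerivAt.log ((hasDerivAt_id s).const_add 1) h1s)
      have d2 : HasDerivAt (fun s => Real.log (1-s)) (-(1/(1-s))) s := by
        have : HasDerivAt (fun s : ℝ => 1 - s) (-1) s := by
          simpa using ((hasDerivAt_id s).const_sub 1)
        simpa [div_eq_mul_inv] using (HasDerivAt.log this h2s)
      have d3 : HasDerivAt (fun s : ℝ => 2*s) 2 s := by
        simpa using (hasDerivAt_id s).const_mul 2
      exact ((d1.sub d2).sub d3).congr_deriv (by ring)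
    apply monotoneOn_of_deriv_nonneg (convex_Icc 0 t)
    · apply ContinuousOn.sub
      apply ContinuousOn.sub
      · apply ContinuousOn.log (by fun_prop)
        intro s hs; simp at hs; nlinarith [hs.1]
      · apply ContinuousOn.log (by fun_prop)
        intro s hs; simp at hs; nlinarith [hs.2, h1]
      · fun_prop
    · intro s hs
      rw [interior_Icc] at hs
      exact (hd s hs).differentiableAt.differentiableWithinAt
    · intro s hs
      rw [interior_Icc] at hs
      rw [(hd s hs).deriv]
      have h2s : (0:ℝ) < 1-s := by nlinarith [hs.2, h1]
      have h1s : (0:ℝ) < 1+s := by nlinarith [hs.1]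
      rw [div_add_div _ _ (ne_of_gt h1s) (ne_of_gt h2s)]
      have e : (1*(1-s) + (1+s)*1)/((1+s)*(1-s)) - 2 = 2*s^2/((1+s)*(1-s)) := by
        field_simp; ring
      rw [e]
      positivity
  have := key (left_mem_Icc.mpr h0) (right_mem_Icc.mpr h0) h0
  simp only [hu] at this
  simp at this
  linarith

noncomputable def Haux (x y : ℝ) : ℝ :=
  2*(y^2 - x^2)/((x^2+2)*(2+y^2)*x) * Real.log (x+y)
  - 2*(y+x)/((x^2+2)*(2+y^2)*x) * ((y - x) * Real.log (y - x))
  + (2*Real.sqrt 2/(x^2+2) - Real.sqrt 2) * Real.arctan (y/Real.sqrt 2)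
  - 2*y/(2+y^2)

lemma Haux_continuousOn (x : ℝ) (hx : 0 < x) : ContinuousOn (Haux x) (Ici 0) := by
  have h1 : ∀ y : ℝ, (x^2+2)*(2+y^2)*x ≠ 0 := fun y => by positivity
  apply ContinuousOn.sub
  apply ContinuousOn.add
  apply ContinuousOn.sub
  · apply ContinuousOn.mul
    · exact (continuousOn_const.mul (by fun_prop)).div (by fun_prop) (fun y _ => h1 y)
    · apply ContinuousOn.log (by fun_prop)
      intro y hy; simp at hy; positivity
  · apply ContinuousOn.mul
    · exact (continuousOn_const.mul (by fun_prop)).div (by fun_prop) (fun y _ => h1 y)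
    · have hc : Continuous (fun t : ℝ => t * Real.log t) := Real.continuous_mul_log
      exact (hc.comp (continuous_id.sub continuous_const)).continuousOn
  · exact (continuous_const.mul (Real.continuous_arctan.comp (continuous_id.div_const _))).continuousOn
  · exact (continuous_const.mul continuous_id).continuousOn.div (by fun_prop)
      (fun y _ => by positivity)

lemma Haux_hasDerivAt (x y : ℝ) (hx : 0 < x) (hy : 0 < y) (hyx : y ≠ x) :
    HasDerivAt (Haux x) (m0 y * ((y/x) * Real.log |(x+y)/(x-y)| - 2)) y := by
  have hs2 : Real.sqrt 2 ^ 2 = 2 := Real.sq_sqrt (by norm_num)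
  have hs0 : Real.sqrt 2 ≠ 0 := by positivity
  have hxy : x + y ≠ 0 := by positivity
  have hymx : y - x ≠ 0 := sub_ne_zero.mpr hyx
  have hden : (x^2+2)*(2+y^2)*x ≠ 0 := by positivity
  have h2y : (2:ℝ)+y^2 ≠ 0 := by positivity
  have hx2 : (x:ℝ)^2+2 ≠ 0 := by positivity
  -- pieces
  have dA : HasDerivAt (fun y => 2*(y^2 - x^2)/((x^2+2)*(2+y^2)*x))
      ((2*(2*y) * ((x^2+2)*(2+y^2)*x) - 2*(y^2-x^2) * ((x^2+2)*(2*y)*x))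
        / ((x^2+2)*(2+y^2)*x)^2) y := by
    have n1 : HasDerivAt (fun y : ℝ => 2*(y^2 - x^2)) (2*(2*y)) y := by
      have := ((hasDerivAt_pow 2 y).sub_const (x^2)).const_mul 2
      simpa using this
    have d1 : HasDerivAt (fun y : ℝ => (x^2+2)*(2+y^2)*x) ((x^2+2)*(2*y)*x) y := by
      have := (((hasDerivAt_pow 2 y).const_add 2).const_mul (x^2+2)).mul_const x
      simpa using this
    exact n1.div d1 hden
  have dlog1 : HasDerivAt (fun y => Real.log (x+y)) (1/(x+y)) y := by
    simpa using (HasDerivAt.log ((hasDerivAt_id y).const_add x) hxy)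
  have dB : HasDerivAt (fun y => 2*(y+x)/((x^2+2)*(2+y^2)*x))
      ((2 * ((x^2+2)*(2+y^2)*x) - 2*(y+x) * ((x^2+2)*(2*y)*x))
        / ((x^2+2)*(2+y^2)*x)^2) y := by
    have n2 : HasDerivAt (fun y : ℝ => 2*(y+x)) 2 y := by
      simpa using ((hasDerivAt_id y).add_const x).const_mul 2
    have d1 : HasDerivAt (fun y : ℝ => (x^2+2)*(2+y^2)*x) ((x^2+2)*(2*y)*x) y := by
      have := (((hasDerivAt_pow 2 y).const_add 2).const_mul (x^2+2)).mul_const x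
      simpa using this
    exact n2.div d1 hden
  have dmlog : HasDerivAt (fun y => (y - x) * Real.log (y - x))
      (1 * Real.log (y-x) + (y-x) * (1/(y-x))) y := by
    have hid : HasDerivAt (fun y : ℝ => y - x) 1 y := (hasDerivAt_id y).sub_const x
    exact hid.mul (by simpa using HasDerivAt.log hid hymx)
  have darct : HasDerivAt (fun y => (2*Real.sqrt 2/(x^2+2) - Real.sqrt 2) * Real.arctan (y/Real.sqrt 2))
      ((4/(x^2+2) - 2) * (1/(2+y^2))) y := by
    have h := (((hasDerivAt_id y).div_const (Real.sqrt 2)).arctan).const_mul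
        (2*Real.sqrt 2/(x^2+2) - Real.sqrt 2)
    refine h.congr_deriv ?_
    have hy2 : (1 + (id y/Real.sqrt 2)^2) = (2+y^2)/2 := by
      rw [id_eq, div_pow, hs2]; field_simp
    rw [hy2]
    field_simp
    ring_nf
  have dlast : HasDerivAt (fun y : ℝ => 2*y/(2+y^2))
      ((2 * (2+y^2) - 2*y*(2*y))/(2+y^2)^2) y := by
    have n : HasDerivAt (fun y : ℝ => 2*y) 2 y := by simpa using (hasDerivAt_id y).const_mul 2
    have d : HasDerivAt (fun y : ℝ => 2+y^2) (2*y) y := by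
      simpa using (hasDerivAt_pow 2 y).const_add 2
    exact n.div d h2y
  have total := (((dA.mul dlog1).sub (dB.mul dmlog)).add darct).sub dlast
  have hH : Haux x = fun y => (2*(y^2 - x^2)/((x^2+2)*(2+y^2)*x) * Real.log (x+y)
      - 2*(y+x)/((x^2+2)*(2+y^2)*x) * ((y - x) * Real.log (y - x))
      + (2*Real.sqrt 2/(x^2+2) - Real.sqrt 2) * Real.arctan (y/Real.sqrt 2))
      - 2*y/(2+y^2) := rfl
  rw [hH]
  refine total.congr_deriv ?_
  have hL : Real.log |(x+y)/(x-y)| = Real.log (x+y) - Real.log (y-x) := by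
    rw [Real.log_abs, Real.log_div hxy (by intro h; apply hymx; linarith [sub_eq_zero.mp h] )]
    rw [show x - y = -(y-x) by ring, Real.log_neg_eq_log]
  rw [hL, m0_eq]
  set lx := Real.log (x+y)
  set ly := Real.log (y-x)
  field_simp
  ring

lemma Haux_tendsto (x : ℝ) (hx : 0 < x) :
    Tendsto (Haux x) atTop (𝓝 ((2*Real.sqrt 2/(x^2+2) - Real.sqrt 2) * (Real.pi/2))) := by
  have hx2 : (x:ℝ)^2+2 ≠ 0 := by positivity
  set c : ℝ → ℝ := fun t => (2 - 2*x^2*t^2) / ((x^2+2)*(2*t^2+1)*x) with hc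
  set q : ℝ → ℝ := fun t => (x*t+1)/(1-x*t) with hq
  have heq : ∀ᶠ y in atTop, Haux x y
      = c y⁻¹ * Real.log (q y⁻¹)
        + (2*Real.sqrt 2/(x^2+2) - Real.sqrt 2) * Real.arctan (y/Real.sqrt 2)
        - 2*y⁻¹/(2*(y⁻¹)^2+1) := by
    filter_upwards [eventually_gt_atTop x, eventually_gt_atTop 0] with y hyx hy0
    have hy0' : y ≠ 0 := ne_of_gt hy0
    have hymx : (0:ℝ) < y - x := by linarith
    have hxy : (0:ℝ) < x + y := by linarith
    have hcq : c y⁻¹ = 2*(y^2 - x^2)/((x^2+2)*(2+y^2)*x) := by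
      rw [hc]; field_simp
    have hden : 1 - x*y⁻¹ = (y-x)/y := by field_simp
    have hqq : q y⁻¹ = (x+y)/(y-x) := by
      rw [hq]
      simp only
      rw [hden, div_eq_div_iff (by positivity) (ne_of_gt hymx)]
      field_simp
      try ring
    have hlast : 2*y⁻¹/(2*(y⁻¹)^2+1) = 2*y/(2+y^2) := by
      field_simp
    rw [hcq, hqq, hlast, Real.log_div (ne_of_gt hxy) (ne_of_gt hymx), Haux]
    ring
  have hiv : Tendsto (fun y : ℝ => y⁻¹) atTop (𝓝 (0:ℝ)) := tendsto_inv_atTop_zero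
  have hcc : Tendsto c (𝓝 0) (𝓝 (2/((x^2+2)*x))) := by
    have h1 : ContinuousAt c 0 := by
      apply ContinuousAt.div (by fun_prop) (by fun_prop)
      show ((x^2+2)*(2*(0:ℝ)^2+1)*x) ≠ 0
      positivity
    convert h1.tendsto using 2
    rw [hc]
    norm_num
  have hqcont : ContinuousAt q 0 := by
    apply ContinuousAt.div (by fun_prop) (by fun_prop)
    norm_num
  have hq0 : q 0 = 1 := by rw [hq]; norm_num
  have t1 : Tendsto (fun y : ℝ => c y⁻¹ * Real.log (q y⁻¹)) atTop (𝓝 0) := by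
    have hl : Tendsto (fun t : ℝ => Real.log (q t)) (𝓝 0) (𝓝 0) := by
      have h2 : ContinuousAt (fun t => Real.log (q t)) 0 :=
        ContinuousAt.log hqcont (by rw [hq0]; norm_num)
      convert h2.tendsto using 2
      rw [hq0, Real.log_one]
    have := (hcc.comp hiv).mul (hl.comp hiv)
    simpa using this
  have t2 : Tendsto (fun y : ℝ => (2*Real.sqrt 2/(x^2+2) - Real.sqrt 2) * Real.arctan (y/Real.sqrt 2))
      atTop (𝓝 ((2*Real.sqrt 2/(x^2+2) - Real.sqrt 2) * (Real.pi/2))) := by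
    apply Tendsto.const_mul
    have harg : Tendsto (fun y : ℝ => y / Real.sqrt 2) atTop atTop :=
      Tendsto.atTop_div_const (by positivity) tendsto_id
    exact (Real.tendsto_arctan_atTop.mono_right nhdsWithin_le_nhds).comp harg
  have t3 : Tendsto (fun y : ℝ => 2*y⁻¹/(2*(y⁻¹)^2+1)) atTop (𝓝 0) := by
    have hct : ContinuousAt (fun t : ℝ => 2*t/(2*t^2+1)) 0 := by
      apply ContinuousAt.div (by fun_prop) (by fun_prop)
      norm_num
    have h2 : Tendsto (fun t : ℝ => 2*t/(2*t^2+1)) (𝓝 0) (𝓝 0) := by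
      convert hct.tendsto using 2
      norm_num
    exact h2.comp hiv
  have h := (t1.add t2).sub t3
  apply Tendsto.congr' (heq.mono fun y hy => hy.symm)
  simpa using h

-- log |(x+y)/(x-y)| rewriting
lemma logabs_eq (x y : ℝ) (hxy : x + y ≠ 0) (hyx : y ≠ x) :
    Real.log |(x+y)/(x-y)| = Real.log (x+y) - Real.log (y-x) := by
  have hymx : y - x ≠ 0 := sub_ne_zero.mpr hyx
  rw [Real.log_abs, Real.log_div hxy (by intro h; exact hymx (by linarith [sub_eq_zero.mp h]))]
  rw [show x - y = -(y-x) by ring, Real.log_neg_eq_log]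

lemma integrand_nonneg (x : ℝ) (hx : 0 < x) :
    ∀ y ∈ Ioi x, 0 ≤ m0 y * ((y/x) * Real.log |(x+y)/(x-y)| - 2) := by
  intro y hy
  rw [mem_Ioi] at hy
  have hy0 : 0 < y := hx.trans hy
  have hm : 0 ≤ m0 y := by rw [m0_eq]; positivity
  apply mul_nonneg hm
  rw [sub_nonneg, logabs_eq x y (by positivity) (ne_of_gt hy)]
  have ht0 : 0 ≤ x/y := by positivity
  have ht1 : x/y < 1 := (div_lt_one hy0).mpr hy
  have key := artanh_ge (x/y) ht0 ht1
  have h1 : (1:ℝ) + x/y = (x+y)/y := by field_simp; ring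
  have h2 : (1:ℝ) - x/y = (y-x)/y := by field_simp
  rw [h1, h2, Real.log_div (by positivity) (ne_of_gt hy0),
    Real.log_div (by intro h; nlinarith [sub_eq_zero.mp h] ) (ne_of_gt hy0)] at key
  have hyx2 : (0:ℝ) < y/x := by positivity
  calc (2:ℝ) = (y/x) * (2*(x/y)) := by field_simp
    _ ≤ (y/x) * (Real.log (x+y) - Real.log (y-x)) := by
        apply mul_le_mul_of_nonneg_left _ (le_of_lt hyx2)
        linarith

lemma intervalIntegrable_log' (x : ℝ) (hx : 0 < x) :
    IntervalIntegrable Real.log volume 0 x := by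
  have key : IntegrableOn (fun t => Real.log x - Real.log t) (Ioc 0 x) volume := by
    apply intervalIntegral.integrableOn_deriv_of_nonneg
      (g := fun t => t*(Real.log x + 1) - t*Real.log t)
    · apply ContinuousOn.sub
      · fun_prop
      · exact Real.continuous_mul_log.continuousOn
    · intro t ht
      have ht0 : t ≠ 0 := ne_of_gt ht.1
      have d1 : HasDerivAt (fun t : ℝ => t*(Real.log x + 1)) (Real.log x + 1) t := by
        simpa using (hasDerivAt_id t).mul_const (Real.log x + 1)
      have d2 : HasDerivAt (fun t : ℝ => t*Real.log t) (Real.log t + 1) t := by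
        have h := (hasDerivAt_id t).mul (Real.hasDerivAt_log ht0)
        refine h.congr_deriv ?_
        field_simp
        rw [id_eq]; ring
      have := d1.sub d2
      exact this.congr_deriv (by ring)
    · intro t ht
      have := Real.log_le_log ht.1 ht.2.le
      linarith
  have : IntegrableOn Real.log (Ioc 0 x) volume := by
    have hc : IntegrableOn (fun _ : ℝ => Real.log x) (Ioc 0 x) volume :=
      integrableOn_const measure_Ioc_lt_top.ne
    have h4 : Real.log = (fun _ : ℝ => Real.log x) - (fun t => Real.log x - Real.log t) := by
      funext t; simp
    rw [IntegrableOn, h4]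
    exact hc.sub key
  exact (intervalIntegrable_iff_integrableOn_Ioc_of_le hx.le).mpr this

lemma intervalIntegrable_logsub (x : ℝ) (hx : 0 < x) :
    IntervalIntegrable (fun y => Real.log (x - y)) volume 0 x := by
  have h := (intervalIntegrable_log' x hx).comp_sub_left x
  simpa using h.symm

lemma integrand_intervalIntegrable (x : ℝ) (hx : 0 < x) :
    IntervalIntegrable (fun y => m0 y * ((y/x) * Real.log |(x+y)/(x-y)| - 2)) volume 0 x := by
  have huIcc : Set.uIcc (0:ℝ) x = Icc 0 x := uIcc_of_le hx.le
  have hm0cont : Continuous m0 := by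
    have : m0 = fun y => 4/(2+y^2)^2 := funext m0_eq
    rw [this]
    exact continuous_const.div (by fun_prop) (fun y => by positivity)
  have h1 : IntervalIntegrable (fun y => m0 y * (y/x) * Real.log (x+y) - 2*m0 y) volume 0 x := by
    apply ContinuousOn.intervalIntegrable
    rw [huIcc]
    apply ContinuousOn.sub
    · apply ContinuousOn.mul (by fun_prop)
      apply ContinuousOn.log (by fun_prop)
      intro y hy
      have := hy.1
      positivity
    · fun_prop
  have h2 : IntervalIntegrable (fun y => Real.log (x-y) * (m0 y * (y/x))) volume 0 x := by
    apply (intervalIntegrable_logsub x hx).mul_continuousOn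
    rw [huIcc]; fun_prop
  have h3 := h1.sub h2
  rw [intervalIntegrable_iff_integrableOn_Ioc_of_le hx.le] at h3 ⊢
  apply h3.congr_fun_ae
  have hne : ∀ᵐ y ∂(volume.restrict (Ioc 0 x)), y ≠ x := by
    apply ae_restrict_of_ae
    refine MeasureTheory.ae_iff.mpr ?_
    simpa using measure_singleton x
  filter_upwards [ae_restrict_mem measurableSet_Ioc, hne] with y hy hyx
  have hy0 : 0 < y := hy.1
  rw [logabs_eq x y (by positivity) hyx]
  have : Real.log (y - x) = Real.log (x - y) := by
    rw [show y - x = -(x-y) by ring, Real.log_neg_eq_log]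
  rw [this]
  ring

theorem stmt_16 (x : ℝ) (hx : 0 < x) :
    (1/Real.pi) * ∫ y in Set.Ioi (0:ℝ),
        m0 y * ((y/x) * Real.log |(x+y)/(x-y)| - 2) =
      -(Real.sqrt 2/2) * x^2/(2 + x^2) := by
  set g : ℝ → ℝ := fun y => m0 y * ((y/x) * Real.log |(x+y)/(x-y)| - 2) with hg
  have hx2 : (x:ℝ)^2+2 ≠ 0 := by positivity
  have hcont := Haux_continuousOn x hx
  have hI2 : ∫ y in Ioi x, g y
      = (2*Real.sqrt 2/(x^2+2) - Real.sqrt 2) * (Real.pi/2) - Haux x x := by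
    apply integral_Ioi_of_hasDerivAt_of_nonneg (g := Haux x)
    · exact (hcont x hx.le).mono (Ici_subset_Ici.mpr hx.le)
    · intro y hy; exact Haux_hasDerivAt x y hx (hx.trans hy) (ne_of_gt hy)
    · exact integrand_nonneg x hx
    · exact Haux_tendsto x hx
  have hIntOn2 : IntegrableOn g (Ioi x) volume :=
    integrableOn_Ioi_deriv_of_nonneg ((hcont x hx.le).mono (Ici_subset_Ici.mpr hx.le))
      (fun y hy => Haux_hasDerivAt x y hx (hx.trans hy) (ne_of_gt hy))
      (integrand_nonneg x hx) (Haux_tendsto x hx)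
  have hI1 : ∫ y in Ioc 0 x, g y = Haux x x - Haux x 0 := by
    rw [← intervalIntegral.integral_of_le hx.le]
    apply intervalIntegral.integral_eq_sub_of_hasDeriv_right_of_le (f := Haux x) hx.le
    · exact hcont.mono (fun y hy => hy.1)
    · intro y hy
      exact (Haux_hasDerivAt x y hx hy.1 (ne_of_lt hy.2)).hasDerivWithinAt
    · exact integrand_intervalIntegrable x hx
  have hIntOn1 : IntegrableOn g (Ioc 0 x) volume :=
    (intervalIntegrable_iff_integrableOn_Ioc_of_le hx.le).mp (integrand_intervalIntegrable x hx)
  have hsplit : ∫ y in Ioi (0:ℝ), g y = (∫ y in Ioc 0 x, g y) + ∫ y in Ioi x, g y := by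
    rw [← Ioc_union_Ioi_eq_Ioi hx.le]
    exact setIntegral_union (Ioc_disjoint_Ioi le_rfl) measurableSet_Ioi hIntOn1 hIntOn2
  have hH0 : Haux x 0 = 0 := by
    rw [Haux]
    rw [show (0:ℝ) - x = -x by ring, Real.log_neg_eq_log]
    simp [Real.arctan_zero]
    ring
  rw [hsplit, hI1, hI2, hH0]
  have hcollapse : (Haux x x - 0) + ((2*Real.sqrt 2/(x^2+2) - Real.sqrt 2) * (Real.pi/2) - Haux x x)
      = (2*Real.sqrt 2/(x^2+2) - Real.sqrt 2) * (Real.pi/2) := by ring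
  rw [hcollapse]
  have hpi : Real.pi ≠ 0 := Real.pi_ne_zero
  have h2x : (2:ℝ) + x^2 ≠ 0 := by positivity
  field_simp
  ring
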